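/- Let α ∈ (0,1) and ω_j = (-1)^j binomial(α, j). For any sequence u_0, u_1, ..., u_N in a real inner product space, with the discrete fractional derivative defined by D_n = τ^{-α} Σ_{j=1}^n ω_{n-j}(u_j - u_0), the sum Σ_{n=1}^N ⟨D_n, u_n - u_{n-1}⟩ is nonnegative. -/

import Mathlib

/-- Grünwald-Letnikov weights: ω_j = (-1)^j α(α-1)⋯(α-j+1)/j!. -/
noncomputable def glWeight (α : ℝ) (j : ℕ) : ℝ :=
  (-1) ^ j * (∏ i ∈ Finset.range j, (α - i)) / (Nat.factorial j)

open Finset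

/-- Partial sums of GL weights: `Gs α m = ∏_{i<m} (i+1-α)/(i+1)`. -/
noncomputable def Gs (α : ℝ) (m : ℕ) : ℝ := ∏ i ∈ range m, (((i : ℝ) + 1 - α) / ((i : ℝ) + 1))

lemma Gs_zero (α : ℝ) : Gs α 0 = 1 := by simp [Gs]

lemma Gs_succ (α : ℝ) (m : ℕ) : Gs α (m + 1) = Gs α m * (((m : ℝ) + 1 - α) / ((m : ℝ) + 1)) := by
  rw [Gs, Gs, prod_range_succ]

lemma Gs_nonneg (α : ℝ) (hα : α ≤ 1) (m : ℕ) : 0 ≤ Gs α m := by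
  refine prod_nonneg fun i _ => div_nonneg ?_ (by positivity)
  have : (0:ℝ) ≤ i := Nat.cast_nonneg i
  linarith

lemma neg_pow_prod (α : ℝ) : ∀ m : ℕ, (-1 : ℝ) ^ (m + 1) * ∏ i ∈ range (m + 1), (α - i)
    = -α * ∏ i ∈ range m, ((i : ℝ) + 1 - α) := by
  intro m
  induction m with
  | zero => simp
  | succ m ih =>
    rw [prod_range_succ (fun i => α - (i : ℝ)) (m + 1), prod_range_succ (fun i => (i : ℝ) + 1 - α) m,
      pow_succ]
    push_cast
    push_cast at ih
    linear_combination ((m : ℝ) + 1 - α) * ih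

lemma glWeight_succ (α : ℝ) (m : ℕ) :
    glWeight α (m + 1) = Gs α m * (-α / ((m : ℝ) + 1)) := by
  have hfac : (∏ i ∈ range m, ((i : ℝ) + 1)) = (Nat.factorial m : ℝ) := by
    exact_mod_cast congrArg (Nat.cast (R := ℝ)) (prod_range_add_one_eq_factorial m)
  have hGs : Gs α m = (∏ i ∈ range m, ((i : ℝ) + 1 - α)) / (Nat.factorial m : ℝ) := by
    rw [Gs, prod_div_distrib, hfac]
  have key := neg_pow_prod α m
  have h1 : (Nat.factorial m : ℝ) ≠ 0 := by positivity
  have h2 : ((m : ℝ) + 1) ≠ 0 := by positivity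
  rw [glWeight, hGs, Nat.factorial_succ]
  push_cast
  rw [key, div_mul_div_comm, mul_comm (Nat.factorial m : ℝ) ((m : ℝ) + 1)]
  ring

lemma glWeight_sum (α : ℝ) : ∀ m : ℕ, ∑ i ∈ range (m + 1), glWeight α i = Gs α m := by
  intro m
  induction m with
  | zero => simp [glWeight, Gs]
  | succ m ih =>
    rw [sum_range_succ, ih, glWeight_succ, Gs_succ]
    have h2 : ((m : ℝ) + 1) ≠ 0 := by positivity
    field_simp
    ring

/-- the difference sequence of `Gs` -/
lemma Gs_d_eq (α : ℝ) (m : ℕ) : Gs α m - Gs α (m + 1) = Gs α m * (α / ((m : ℝ) + 1)) := by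
  rw [Gs_succ]
  have h2 : ((m : ℝ) + 1) ≠ 0 := by positivity
  field_simp
  ring

lemma Gs_d_nonneg (α : ℝ) (h0 : 0 ≤ α) (h1 : α ≤ 1) (m : ℕ) :
    0 ≤ Gs α m - Gs α (m + 1) := by
  rw [Gs_d_eq]
  have := Gs_nonneg α h1 m
  positivity

lemma Gs_c_eq (α : ℝ) (m : ℕ) :
    (Gs α m - Gs α (m + 1)) - (Gs α (m + 1) - Gs α (m + 2)) =
      Gs α m * (α * (1 + α) / (((m : ℝ) + 1) * ((m : ℝ) + 2))) := by
  have e1 := Gs_succ α m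
  have e2 := Gs_succ α (m + 1)
  push_cast at e2
  rw [e2, e1]
  have h2 : ((m : ℝ) + 1) ≠ 0 := by positivity
  have h3 : ((m : ℝ) + 2) ≠ 0 := by positivity
  field_simp
  ring

lemma Gs_c_nonneg (α : ℝ) (h0 : 0 ≤ α) (h1 : α ≤ 1) (m : ℕ) :
    0 ≤ (Gs α m - Gs α (m + 1)) - (Gs α (m + 1) - Gs α (m + 2)) := by
  rw [Gs_c_eq]
  have := Gs_nonneg α h1 m
  positivity

/-- decomposition of a convex decreasing sequence into triangular kernels -/
lemma Gs_decomp (α : ℝ) : ∀ N m : ℕ, m ≤ N →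
    Gs α m = (∑ p ∈ range N, ((Gs α p - Gs α (p + 1)) - (Gs α (p + 1) - Gs α (p + 2))) *
        max ((p : ℝ) + 1 - (m : ℝ)) 0)
      + Gs α N + (Gs α N - Gs α (N + 1)) * ((N : ℝ) - (m : ℝ)) := by
  intro N
  induction N with
  | zero => intro m hm; interval_cases m; simp
  | succ N ih =>
    intro m hm
    rcases Nat.lt_or_ge m (N + 1) with h | h
    · have hmN : m ≤ N := by omega
      have ihm := ih m hmN
      rw [sum_range_succ]
      have hmax : max ((N : ℝ) + 1 - (m : ℝ)) 0 = (N : ℝ) + 1 - (m : ℝ) := by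
        rw [max_eq_left]
        have : (m : ℝ) ≤ N := by exact_mod_cast hmN
        linarith
      rw [hmax]
      push_cast
      push_cast at ihm
      linear_combination ihm
    · have hmN : m = N + 1 := by omega
      subst hmN
      have hz : ∀ p ∈ range (N + 1),
          ((Gs α p - Gs α (p + 1)) - (Gs α (p + 1) - Gs α (p + 2))) *
            max ((p : ℝ) + 1 - ((N + 1 : ℕ) : ℝ)) 0 = 0 := by
        intro p hp
        rw [mem_range] at hp
        have : max ((p : ℝ) + 1 - ((N + 1 : ℕ) : ℝ)) 0 = 0 := by
          rw [max_eq_right]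
          push_cast
          have : (p : ℝ) ≤ N := by exact_mod_cast Nat.lt_succ_iff.mp hp
          linarith
        rw [this, mul_zero]
      rw [sum_eq_zero hz]
      push_cast
      ring
open Finset

/-- window indicator kernel count -/
def tKer (N L n k : ℕ) : ℕ :=
  ((Finset.Icc 1 (N + L - 1)).filter (fun t => (n ≤ t ∧ t < n + L) ∧ (k ≤ t ∧ t < k + L))).card

lemma natCast_sub_eq_max (a b : ℕ) : ((a - b : ℕ) : ℝ) = max ((a : ℝ) - (b : ℝ)) 0 := by
  rcases le_total b a with h | h
  · rw [Nat.cast_sub h, max_eq_left]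
    have : (b : ℝ) ≤ a := by exact_mod_cast h
    linarith
  · rw [Nat.sub_eq_zero_of_le h, max_eq_right]
    · simp
    · have : (a : ℝ) ≤ b := by exact_mod_cast h
      linarith

lemma tKer_cast (N L n k : ℕ) (hL : 1 ≤ L) (hn : n ∈ Finset.Icc 1 N) (hk : k ∈ Finset.Icc 1 N) :
    (tKer N L n k : ℝ) = max ((L : ℝ) - ((max n k - min n k : ℕ) : ℝ)) 0 := by
  rw [Finset.mem_Icc] at hn hk
  have hset : ((Finset.Icc 1 (N + L - 1)).filter
      (fun t => (n ≤ t ∧ t < n + L) ∧ (k ≤ t ∧ t < k + L)))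
      = Finset.Icc (max n k) (min n k + (L - 1)) := by
    ext t
    simp only [Finset.mem_filter, Finset.mem_Icc, le_max_iff, max_le_iff, le_min_iff]
    omega
  rw [tKer, hset, Nat.card_Icc]
  have hcard : min n k + (L - 1) + 1 - max n k = (min n k + L) - max n k := by omega
  rw [hcard, natCast_sub_eq_max]
  congr 1
  rw [natCast_sub_eq_max]
  rcases le_total n k with h | h
  · rw [max_eq_right h, min_eq_left h]
    have : (n : ℝ) ≤ k := by exact_mod_cast h
    rw [max_eq_left (by linarith)]
    push_cast
    ring
  · rw [max_eq_left h, min_eq_right h]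
    have : (k : ℝ) ≤ n := by exact_mod_cast h
    rw [max_eq_left (by linarith)]
    push_cast
    ring

lemma tKer_psd {H : Type*} [NormedAddCommGroup H] [InnerProductSpace ℝ H]
    (N L : ℕ) (w : ℕ → H) :
    0 ≤ ∑ n ∈ Finset.Icc 1 N, ∑ k ∈ Finset.Icc 1 N,
      (tKer N L n k : ℝ) * (inner ℝ (w n) (w k) : ℝ) := by
  have hK : ∀ n k, (tKer N L n k : ℝ) = ∑ t ∈ Finset.Icc 1 (N + L - 1),
      (if n ≤ t ∧ t < n + L then (1 : ℝ) else 0) * (if k ≤ t ∧ t < k + L then (1 : ℝ) else 0) := by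
    intro n k
    rw [tKer, Finset.card_filter, Nat.cast_sum]
    refine Finset.sum_congr rfl fun t _ => ?_
    split_ifs with h1 h2 h3 <;> simp_all
  set I : ℕ → ℕ → ℝ := fun a t => if a ≤ t ∧ t < a + L then 1 else 0 with hI
  have he : ∑ n ∈ Finset.Icc 1 N, ∑ k ∈ Finset.Icc 1 N,
      (tKer N L n k : ℝ) * (inner ℝ (w n) (w k) : ℝ)
      = ∑ t ∈ Finset.Icc 1 (N + L - 1),
        (inner ℝ (∑ n ∈ Finset.Icc 1 N, I n t • w n)
          (∑ n ∈ Finset.Icc 1 N, I n t • w n) : ℝ) := by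
    simp_rw [hK, Finset.sum_mul]
    calc ∑ n ∈ Finset.Icc 1 N, ∑ k ∈ Finset.Icc 1 N, ∑ t ∈ Finset.Icc 1 (N + L - 1),
          (I n t * I k t) * (inner ℝ (w n) (w k) : ℝ)
        = ∑ n ∈ Finset.Icc 1 N, ∑ t ∈ Finset.Icc 1 (N + L - 1), ∑ k ∈ Finset.Icc 1 N,
          (I n t * I k t) * (inner ℝ (w n) (w k) : ℝ) :=
        Finset.sum_congr rfl fun n _ => Finset.sum_comm
      _ = ∑ t ∈ Finset.Icc 1 (N + L - 1), ∑ n ∈ Finset.Icc 1 N, ∑ k ∈ Finset.Icc 1 N,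
          (I n t * I k t) * (inner ℝ (w n) (w k) : ℝ) := Finset.sum_comm
      _ = ∑ t ∈ Finset.Icc 1 (N + L - 1),
          (inner ℝ (∑ n ∈ Finset.Icc 1 N, I n t • w n)
            (∑ n ∈ Finset.Icc 1 N, I n t • w n) : ℝ) := by
        simp_rw [sum_inner, inner_sum, real_inner_smul_left, real_inner_smul_right]
        exact Finset.sum_congr rfl fun t _ => Finset.sum_congr rfl fun n _ =>
          Finset.sum_congr rfl fun k _ => by ring
  rw [he]
  exact Finset.sum_nonneg fun t _ => real_inner_self_nonneg

lemma full_nonneg {H : Type*} [NormedAddCommGroup H] [InnerProductSpace ℝ H]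
    (α : ℝ) (h0 : 0 ≤ α) (h1 : α ≤ 1) (N : ℕ) (hN : 1 ≤ N) (w : ℕ → H) :
    0 ≤ ∑ n ∈ Finset.Icc 1 N, ∑ k ∈ Finset.Icc 1 N,
      Gs α (max n k - min n k) * (inner ℝ (w n) (w k) : ℝ) := by
  set c : ℕ → ℝ := fun p => (Gs α p - Gs α (p + 1)) - (Gs α (p + 1) - Gs α (p + 2)) with hc
  set dN : ℝ := Gs α N - Gs α (N + 1) with hdN
  have point : ∀ n ∈ Finset.Icc 1 N, ∀ k ∈ Finset.Icc 1 N,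
      Gs α (max n k - min n k) = (∑ p ∈ range N, c p * (tKer N (p + 1) n k : ℝ))
        + Gs α N + dN * (tKer N N n k : ℝ) := by
    intro n hn k hk
    have hnm := hn; have hkm := hk
    rw [Finset.mem_Icc] at hnm hkm
    set m : ℕ := max n k - min n k with hm
    have hmN : m ≤ N := by omega
    have hdec := Gs_decomp α N m hmN
    have e1 : ∀ p, (tKer N (p + 1) n k : ℝ) = max ((p : ℝ) + 1 - (m : ℝ)) 0 := by
      intro p
      rw [tKer_cast N (p + 1) n k (by omega) hn hk]
      push_cast
      ring_nf
      rfl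
    have e2 : (tKer N N n k : ℝ) = (N : ℝ) - (m : ℝ) := by
      rw [tKer_cast N N n k hN hn hk, max_eq_left]
      have : (m : ℝ) ≤ N := by exact_mod_cast hmN
      linarith
    rw [hdec]
    simp_rw [e1, e2]
    rfl
  have e : ∑ n ∈ Finset.Icc 1 N, ∑ k ∈ Finset.Icc 1 N,
        Gs α (max n k - min n k) * (inner ℝ (w n) (w k) : ℝ)
      = ∑ n ∈ Finset.Icc 1 N, ∑ k ∈ Finset.Icc 1 N,
        ((∑ p ∈ range N, (c p * (tKer N (p + 1) n k : ℝ)) * (inner ℝ (w n) (w k) : ℝ))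
          + (Gs α N * (inner ℝ (w n) (w k) : ℝ)
            + (dN * (tKer N N n k : ℝ)) * (inner ℝ (w n) (w k) : ℝ))) := by
    refine Finset.sum_congr rfl fun n hn => Finset.sum_congr rfl fun k hk => ?_
    rw [point n hn k hk, add_mul, add_mul, Finset.sum_mul]
    ring
  rw [e]
  simp_rw [Finset.sum_add_distrib]
  refine add_nonneg ?_ (add_nonneg ?_ ?_)
  · have eT : ∑ n ∈ Finset.Icc 1 N, ∑ k ∈ Finset.Icc 1 N, ∑ p ∈ range N,
        (c p * (tKer N (p + 1) n k : ℝ)) * (inner ℝ (w n) (w k) : ℝ)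
        = ∑ p ∈ range N, c p * (∑ n ∈ Finset.Icc 1 N, ∑ k ∈ Finset.Icc 1 N,
            (tKer N (p + 1) n k : ℝ) * (inner ℝ (w n) (w k) : ℝ)) := by
      calc ∑ n ∈ Finset.Icc 1 N, ∑ k ∈ Finset.Icc 1 N, ∑ p ∈ range N,
            (c p * (tKer N (p + 1) n k : ℝ)) * (inner ℝ (w n) (w k) : ℝ)
          = ∑ n ∈ Finset.Icc 1 N, ∑ p ∈ range N, ∑ k ∈ Finset.Icc 1 N,
            (c p * (tKer N (p + 1) n k : ℝ)) * (inner ℝ (w n) (w k) : ℝ) :=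
          Finset.sum_congr rfl fun n _ => Finset.sum_comm
        _ = ∑ p ∈ range N, ∑ n ∈ Finset.Icc 1 N, ∑ k ∈ Finset.Icc 1 N,
            (c p * (tKer N (p + 1) n k : ℝ)) * (inner ℝ (w n) (w k) : ℝ) := Finset.sum_comm
        _ = ∑ p ∈ range N, c p * (∑ n ∈ Finset.Icc 1 N, ∑ k ∈ Finset.Icc 1 N,
            (tKer N (p + 1) n k : ℝ) * (inner ℝ (w n) (w k) : ℝ)) := by
          refine Finset.sum_congr rfl fun p _ => ?_
          rw [Finset.mul_sum]
          refine Finset.sum_congr rfl fun n _ => ?_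
          rw [Finset.mul_sum]
          exact Finset.sum_congr rfl fun k _ => by ring
    rw [eT]
    refine Finset.sum_nonneg fun p _ => mul_nonneg ?_ (tKer_psd N (p + 1) w)
    exact Gs_c_nonneg α h0 h1 p
  · have eT : ∑ n ∈ Finset.Icc 1 N, ∑ k ∈ Finset.Icc 1 N, Gs α N * (inner ℝ (w n) (w k) : ℝ)
        = Gs α N * (inner ℝ (∑ n ∈ Finset.Icc 1 N, w n) (∑ n ∈ Finset.Icc 1 N, w n) : ℝ) := by
      rw [sum_inner, Finset.mul_sum]
      refine Finset.sum_congr rfl fun n _ => ?_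
      rw [inner_sum, Finset.mul_sum]
    rw [eT]
    exact mul_nonneg (Gs_nonneg α h1 N) real_inner_self_nonneg
  · have eT : ∑ n ∈ Finset.Icc 1 N, ∑ k ∈ Finset.Icc 1 N,
        (dN * (tKer N N n k : ℝ)) * (inner ℝ (w n) (w k) : ℝ)
        = dN * ∑ n ∈ Finset.Icc 1 N, ∑ k ∈ Finset.Icc 1 N,
            (tKer N N n k : ℝ) * (inner ℝ (w n) (w k) : ℝ) := by
      rw [Finset.mul_sum]
      refine Finset.sum_congr rfl fun n _ => ?_
      rw [Finset.mul_sum]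
      exact Finset.sum_congr rfl fun k _ => by ring
    rw [eT]
    exact mul_nonneg (Gs_d_nonneg α h0 h1 N) (tKer_psd N N w)

lemma tri_nonneg {H : Type*} [NormedAddCommGroup H] [InnerProductSpace ℝ H]
    (α : ℝ) (h0 : 0 ≤ α) (h1 : α ≤ 1) (N : ℕ) (w : ℕ → H) :
    0 ≤ ∑ n ∈ Finset.Icc 1 N, ∑ k ∈ Finset.Icc 1 n,
      Gs α (n - k) * (inner ℝ (w k) (w n) : ℝ) := by
  rcases Nat.eq_zero_or_pos N with hN | hN
  · subst hN; simp
  set A := ∑ n ∈ Finset.Icc 1 N, ∑ k ∈ Finset.Icc 1 n,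
      Gs α (n - k) * (inner ℝ (w k) (w n) : ℝ) with hA
  set B := ∑ n ∈ Finset.Icc 1 N, ∑ k ∈ Finset.Ioc n N,
      Gs α (k - n) * (inner ℝ (w n) (w k) : ℝ) with hB
  set D := ∑ n ∈ Finset.Icc 1 N, Gs α 0 * (inner ℝ (w n) (w n) : ℝ) with hD
  have hD0 : 0 ≤ D := Finset.sum_nonneg fun n _ =>
    mul_nonneg (Gs_nonneg α h1 0) real_inner_self_nonneg
  -- split of the full sum
  have hsplit : ∑ n ∈ Finset.Icc 1 N, ∑ k ∈ Finset.Icc 1 N,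
      Gs α (max n k - min n k) * (inner ℝ (w n) (w k) : ℝ) = A + B := by
    rw [hA, hB, ← Finset.sum_add_distrib]
    refine Finset.sum_congr rfl fun n hn => ?_
    rw [Finset.mem_Icc] at hn
    have hun : Finset.Icc 1 N = Finset.Icc 1 n ∪ Finset.Ioc n N := by
      ext a
      simp only [Finset.mem_union, Finset.mem_Icc, Finset.mem_Ioc]
      omega
    rw [hun, Finset.sum_union]
    · congr 1
      · refine Finset.sum_congr rfl fun k hk => ?_
        rw [Finset.mem_Icc] at hk
        rw [max_eq_left hk.2, min_eq_right hk.2, real_inner_comm]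
      · refine Finset.sum_congr rfl fun k hk => ?_
        rw [Finset.mem_Ioc] at hk
        rw [max_eq_right hk.1.le, min_eq_left hk.1.le]
    · rw [Finset.disjoint_left]
      intro a ha hb
      rw [Finset.mem_Icc] at ha
      rw [Finset.mem_Ioc] at hb
      omega
  -- B equals A minus the diagonal
  have hBA : B = A - D := by
    have h1' : B = ∑ k ∈ Finset.Icc 1 N, ∑ n ∈ Finset.Ico 1 k,
        Gs α (k - n) * (inner ℝ (w n) (w k) : ℝ) := by
      rw [hB]
      rw [show Finset.Icc 1 N = Finset.Ico 1 (N + 1) from (Finset.Ico_add_one_right_eq_Icc 1 N).symm]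
      simp_rw [show ∀ n : ℕ, Finset.Ioc n N = Finset.Ico (n + 1) (N + 1) from
        fun n => by ext x; simp only [Finset.mem_Ioc, Finset.mem_Ico]; omega]
      rw [Finset.sum_Ico_Ico_comm' 1 (N + 1)]
    have h2' : A = (∑ n ∈ Finset.Icc 1 N, ∑ k ∈ Finset.Ico 1 n,
        Gs α (n - k) * (inner ℝ (w k) (w n) : ℝ)) + D := by
      rw [hA, hD, ← Finset.sum_add_distrib]
      refine Finset.sum_congr rfl fun n hn => ?_
      rw [Finset.mem_Icc] at hn
      rw [show Finset.Icc 1 n = Finset.Ico 1 (n + 1) from (Finset.Ico_add_one_right_eq_Icc 1 n).symm,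
        Finset.sum_Ico_succ_top hn.1]
      simp
    rw [h1', h2', add_sub_cancel_right]
  have hfull := full_nonneg α h0 h1 N hN w
  rw [hsplit, hBA] at hfull
  linarith

theorem discrete_positivity {H : Type*} [NormedAddCommGroup H] [InnerProductSpace ℝ H]
    (α : ℝ) (hα : α ∈ Set.Ioo (0 : ℝ) 1) (τ : ℝ) (hτ : 0 < τ)
    (N : ℕ) (u : ℕ → H) :
    0 ≤ ∑ n ∈ Finset.Icc 1 N,
      (inner (𝕜 := ℝ)
        (τ ^ (-α) • ∑ j ∈ Finset.Icc 1 n, glWeight α (n - j) • (u j - u 0))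
        (u n - u (n - 1)) : ℝ) := by
  obtain ⟨h0, h1⟩ := hα
  have htel : ∀ j : ℕ, u j - u 0 = ∑ k ∈ Finset.Icc 1 j, (u k - u (k - 1)) := by
    intro j
    induction j with
    | zero => simp
    | succ j ih =>
      rw [show Finset.Icc 1 (j + 1) = Finset.Ico 1 (j + 2) from (Finset.Ico_add_one_right_eq_Icc _ _).symm,
        Finset.sum_Ico_succ_top (by omega),
        show Finset.Ico 1 (j + 1) = Finset.Icc 1 j from Finset.Ico_add_one_right_eq_Icc _ _, ← ih]
      simp
  have hrev : ∀ k n : ℕ, k ≤ n → ∑ j ∈ Finset.Icc k n, glWeight α (n - j)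
      = Gs α (n - k) := by
    intro k n hkn
    rw [← glWeight_sum α (n - k)]
    refine Finset.sum_nbij' (fun j => n - j) (fun i => n - i) ?_ ?_ ?_ ?_ ?_ <;>
      intro a ha <;> simp only [Finset.mem_Icc, Finset.mem_range] at ha ⊢ <;> omega
  have hinner : ∀ n, 1 ≤ n →
      ∑ j ∈ Finset.Icc 1 n, glWeight α (n - j) • (u j - u 0)
        = ∑ k ∈ Finset.Icc 1 n, Gs α (n - k) • (u k - u (k - 1)) := by
    intro n hn
    simp_rw [htel, Finset.smul_sum]
    rw [show Finset.Icc 1 n = Finset.Ico 1 (n + 1) from (Finset.Ico_add_one_right_eq_Icc _ _).symm]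
    simp_rw [show ∀ j : ℕ, Finset.Icc 1 j = Finset.Ico 1 (j + 1) from
      fun j => (Finset.Ico_add_one_right_eq_Icc _ _).symm]
    rw [← Finset.sum_Ico_Ico_comm 1 (n + 1) (fun k j => glWeight α (n - j) • (u k - u (k - 1)))]
    refine Finset.sum_congr rfl fun k hk => ?_
    rw [Finset.mem_Ico] at hk
    rw [show Finset.Ico k (n + 1) = Finset.Icc k n from Finset.Ico_add_one_right_eq_Icc _ _,
      ← Finset.sum_smul, hrev k n (by omega)]
  have key : ∀ n ∈ Finset.Icc 1 N,
      (inner (𝕜 := ℝ) (τ ^ (-α) • ∑ j ∈ Finset.Icc 1 n, glWeight α (n - j) • (u j - u 0))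
        (u n - u (n - 1)) : ℝ)
      = τ ^ (-α) * ∑ k ∈ Finset.Icc 1 n,
          Gs α (n - k) * (inner ℝ (u k - u (k - 1)) (u n - u (n - 1)) : ℝ) := by
    intro n hn
    rw [Finset.mem_Icc] at hn
    rw [real_inner_smul_left, hinner n hn.1, sum_inner]
    congr 1
    exact Finset.sum_congr rfl fun k _ => real_inner_smul_left _ _ _
  rw [Finset.sum_congr rfl key, ← Finset.mul_sum]
  exact mul_nonneg (Real.rpow_pos_of_pos hτ (-α)).le
    (tri_nonneg α h0.le h1.le N (fun n => u n - u (n - 1)))
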